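/- Copy-invariance in the exchange model: let M = (W,R,V) be a binary Kripke model and define the ternary model J^M with W' = {u₁,u₂ : u ∈ W}, R' = {⟨v₁,u₁,u₂⟩, ⟨v₁,u₂,u₁⟩, ⟨v₂,u₁,u₂⟩, ⟨v₂,u₂,u₁⟩ : vRu}, V'(p) = {u₁,u₂ : u ∈ V(p)} and V'(m) = W'. Then for every formula A in the language with ·, →, ∧, ∨, ¬, ⊥, ⊤ and every u ∈ W: J^M, u₁ ⊨ A if and only if J^M, u₂ ⊨ A. -/
import Mathlib

/-- Formulas of the commutative language: `·`, `→`, `∧`, `∨`, `¬`, `⊥`, `⊤`. -/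
inductive FmE : Type
  | atom : ℕ → FmE
  | bot  : FmE
  | top  : FmE
  | conj : FmE → FmE → FmE
  | disj : FmE → FmE → FmE
  | prod : FmE → FmE → FmE
  | arrow : FmE → FmE → FmE
  | neg  : FmE → FmE
  deriving DecidableEq

/-- A binary Kripke model. -/
structure KMod where
  W : Type
  ne : Nonempty W
  R : W → W → Prop
  V : ℕ → W → Prop

/-- The ternary frame relation of the exchange model `J^M`:
`R' = {⟨v₁,u₁,u₂⟩, ⟨v₁,u₂,u₁⟩, ⟨v₂,u₁,u₂⟩, ⟨v₂,u₂,u₁⟩ : vRu}`,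
where `w₁ = (w, false)` and `w₂ = (w, true)`. -/
def RE (M : KMod) (a b c : M.W × Bool) : Prop :=
  ∃ v u, M.R v u ∧ (a.1 = v) ∧
    ((b = (u, false) ∧ c = (u, true)) ∨ (b = (u, true) ∧ c = (u, false)))

/-- The valuation of `J^M`: `V'(p) = {u₁, u₂ : u ∈ V(p)}` and `V'(m) = W'`,
the distinguished letter `m` being `atom 0` (letter `p` is `atom (p+1)`). -/
def VE (M : KMod) (n : ℕ) (x : M.W × Bool) : Prop :=
  match n with
  | 0 => True
  | n + 1 => M.V n x.1

/-- Ternary satisfaction in `J^M` for the commutative language. -/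
def satE (M : KMod) : FmE → M.W × Bool → Prop
  | .atom n, u => VE M n u
  | .bot, _ => False
  | .top, _ => True
  | .conj A B, u => satE M A u ∧ satE M B u
  | .disj A B, u => satE M A u ∨ satE M B u
  | .neg A, u => ¬ satE M A u
  | .prod A B, u => ∃ v w, RE M u v w ∧ satE M A v ∧ satE M B w
  | .arrow A B, u => ∀ v w, RE M v w u → satE M A w → satE M B v

lemma RE_fst (M : KMod) (u : M.W) (b b' : Bool) (v w : M.W × Bool) :
    RE M (u, b) v w ↔ RE M (u, b') v w := by
  simp [RE]

lemma RE_swap (M : KMod) (v : M.W × Bool) (u : M.W) (b : Bool) :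
    RE M v (u, b) (u, !b) ↔ M.R v.1 u := by
  cases b <;> simp [RE]

/-- Copy-invariance in the exchange model: for every formula `A` and every
state `u` of the base Kripke model, `J^M, u₁ ⊨ A` iff `J^M, u₂ ⊨ A`. -/
theorem stmt17 (M : KMod) (A : FmE) (u : M.W) :
    satE M A (u, false) ↔ satE M A (u, true) := by
  induction A generalizing u with
  | atom n => cases n <;> simp [satE, VE]
  | bot => simp [satE]
  | top => simp [satE]
  | conj A B ihA ihB => simp [satE, ihA, ihB]
  | disj A B ihA ihB => simp [satE, ihA, ihB]
  | neg A ihA => simp [satE, ihA]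
  | prod A B ihA ihB =>
      simp only [satE]
      constructor <;> rintro ⟨v, w, hr, ha, hb⟩ <;>
        exact ⟨v, w, (RE_fst M u _ _ v w).mp hr, ha, hb⟩
  | arrow A B ihA ihB =>
      simp only [satE]
      constructor <;> intro h v w hr ha
      · rcases hr with ⟨v0, u0, hR, hv, h2⟩
        rcases h2 with ⟨h3, h4⟩ | ⟨h3, h4⟩
        · have hu : u0 = u := by simpa using h4.symm
          subst hu; subst h3
          have hre : RE M v (u0, true) (u0, false) := by
            have := (RE_swap M v u0 true).mpr (hv ▸ hR); simpa using this
          exact h v (u0, true) hre ((ihA u0).mp (by simpa using ha))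
        · simp at h4
      · rcases hr with ⟨v0, u0, hR, hv, h2⟩
        rcases h2 with ⟨h3, h4⟩ | ⟨h3, h4⟩
        · simp at h4
        · have hu : u0 = u := by simpa using h4.symm
          subst hu; subst h3
          have hre : RE M v (u0, false) (u0, true) := by
            have := (RE_swap M v u0 false).mpr (hv ▸ hR); simpa using this
          exact h v (u0, false) hre ((ihA u0).mpr (by simpa using ha))
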